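/- Weighted degenerate norm identity ((6.38)): Let ρ₀ : ℝ → ℝ be twice continuously differentiable on [0,1] with ρ₀ ≥ 0 on [0,1] and ρ₀(0) = ρ₀(1) = 0, and let w : ℝ → ℝ be twice continuously differentiable on [0,1]. Then ∫_{0}^{1} ( ρ₀^{3/2} w'' + 2 ρ₀^{1/2} ρ₀' w' )² dx = ∫_{0}^{1} ρ₀³ (w'')² dx − 2 ∫_{0}^{1} ρ₀'' ρ₀² (w')² dx. -/

import Mathlib

open Set intervalIntegral MeasureTheory

/-- Weighted degenerate norm identity ((6.38)). -/
theorem weighted_degenerate_identity (ρ₀ w : ℝ → ℝ)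
    (hρ : ContDiffOn ℝ 2 ρ₀ (Set.Icc 0 1))
    (hρnn : ∀ x ∈ Set.Icc (0:ℝ) 1, 0 ≤ ρ₀ x)
    (h0 : ρ₀ 0 = 0) (h1 : ρ₀ 1 = 0)
    (hw : ContDiffOn ℝ 2 w (Set.Icc 0 1)) :
    ∫ x in (0:ℝ)..1,
        ((ρ₀ x) ^ ((3:ℝ)/2) * iteratedDerivWithin 2 w (Set.Icc 0 1) x +
          2 * (ρ₀ x) ^ ((1:ℝ)/2) * derivWithin ρ₀ (Set.Icc 0 1) x *
            derivWithin w (Set.Icc 0 1) x) ^ 2 =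
      (∫ x in (0:ℝ)..1, (ρ₀ x) ^ 3 * (iteratedDerivWithin 2 w (Set.Icc 0 1) x) ^ 2) -
      2 * ∫ x in (0:ℝ)..1,
        iteratedDerivWithin 2 ρ₀ (Set.Icc 0 1) x * (ρ₀ x) ^ 2 *
          (derivWithin w (Set.Icc 0 1) x) ^ 2 := by
  have huniq : UniqueDiffOn ℝ (Set.Icc (0:ℝ) 1) := uniqueDiffOn_Icc (by norm_num)
  set s : Set ℝ := Set.Icc 0 1 with hs
  set ρ' := derivWithin ρ₀ s with hρ'def
  set w' := derivWithin w s with hw'def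
  set ρ'' := derivWithin ρ' s with hρ''def
  set w'' := derivWithin w' s with hw''def
  have hiter : ∀ (f : ℝ → ℝ), ∀ x ∈ s,
      iteratedDerivWithin 2 f s x = derivWithin (derivWithin f s) s x := by
    intro f x hx
    rw [iteratedDerivWithin_succ]
    apply derivWithin_congr
    · intro y hy; exact congrFun iteratedDerivWithin_one y
    · exact congrFun iteratedDerivWithin_one x
  -- regularity
  have hρ'cd : ContDiffOn ℝ 1 ρ' s := hρ.derivWithin huniq (by norm_num)
  have hw'cd : ContDiffOn ℝ 1 w' s := hw.derivWithin huniq (by norm_num)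
  have hρc : ContinuousOn ρ₀ s := hρ.continuousOn
  have hρ'c : ContinuousOn ρ' s := hρ'cd.continuousOn
  have hw'c : ContinuousOn w' s := hw'cd.continuousOn
  have hρ''c : ContinuousOn ρ'' s := (hρ'cd.derivWithin (m := 0) huniq (by norm_num)).continuousOn
  have hw''c : ContinuousOn w'' s := (hw'cd.derivWithin (m := 0) huniq (by norm_num)).continuousOn
  -- HasDerivWithinAt facts
  have hρd : ∀ x ∈ s, HasDerivWithinAt ρ₀ (ρ' x) s x := fun x hx =>
    ((hρ.differentiableOn (by norm_num)) x hx).hasDerivWithinAt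
  have hρ'd : ∀ x ∈ s, HasDerivWithinAt ρ' (ρ'' x) s x := fun x hx =>
    ((hρ'cd.differentiableOn (by norm_num)) x hx).hasDerivWithinAt
  have hw'd : ∀ x ∈ s, HasDerivWithinAt w' (w'' x) s x := fun x hx =>
    ((hw'cd.differentiableOn (by norm_num)) x hx).hasDerivWithinAt
  -- auxiliary function and its derivative
  set H : ℝ → ℝ := fun x => 2 * (ρ₀ x) ^ 2 * ρ' x * (w' x) ^ 2 with hHdef
  set F : ℝ → ℝ := fun x => 4 * ρ₀ x * (ρ' x) ^ 2 * (w' x) ^ 2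
      + 2 * (ρ₀ x) ^ 2 * ρ'' x * (w' x) ^ 2
      + 4 * (ρ₀ x) ^ 2 * ρ' x * w' x * w'' x with hFdef
  have hHd : ∀ x ∈ s, HasDerivWithinAt H (F x) s x := by
    intro x hx
    have h1 : HasDerivWithinAt (fun y => 2 * (ρ₀ y) ^ 2) (2 * (2 * ρ₀ x * ρ' x)) s x := by
      have := ((hρd x hx).fun_pow 2).const_mul (2:ℝ)
      convert! this using 1; push_cast; ring
    have h2 := (h1.fun_mul (hρ'd x hx)).fun_mul ((hw'd x hx).fun_pow 2)
    convert! h2 using 1; push_cast; simp only [hFdef, hHdef]; ring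
  have hFc : ContinuousOn F s := by fun_prop
  have hHc : ContinuousOn H s := by fun_prop
  have hI : Set.uIcc (0:ℝ) 1 = s := Set.uIcc_of_le (by norm_num)
  have hFint : IntervalIntegrable F volume 0 1 :=
    ContinuousOn.intervalIntegrable (by rw [hI]; exact hFc)
  have hFeq : (∫ x in (0:ℝ)..1, F x) = 0 := by
    rw [integral_eq_sub_of_hasDeriv_right_of_le (by norm_num) hHc
      (fun x hx => (((hHd x (Ioo_subset_Icc_self hx)).hasDerivAt
        (Icc_mem_nhds hx.1 hx.2)).hasDerivWithinAt)) hFint]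
    simp [hHdef, h0, h1]
  -- target integrand functions
  set gmain : ℝ → ℝ := fun x => (ρ₀ x) ^ 3 * (w'' x) ^ 2 with hgm
  set gsub : ℝ → ℝ := fun x => ρ'' x * (ρ₀ x) ^ 2 * (w' x) ^ 2 with hgs
  have hgmc : ContinuousOn gmain s := by fun_prop
  have hgsc : ContinuousOn gsub s := by fun_prop
  have hgmint : IntervalIntegrable gmain volume 0 1 :=
    ContinuousOn.intervalIntegrable (by rw [hI]; exact hgmc)
  have hgsint : IntervalIntegrable gsub volume 0 1 :=
    ContinuousOn.intervalIntegrable (by rw [hI]; exact hgsc)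
  -- pointwise identity for the LHS integrand
  have hpt : Set.EqOn (fun x =>
      ((ρ₀ x) ^ ((3:ℝ)/2) * iteratedDerivWithin 2 w s x +
          2 * (ρ₀ x) ^ ((1:ℝ)/2) * ρ' x * w' x) ^ 2)
      (fun x => (gmain x - 2 * gsub x) + F x) (Set.uIcc 0 1) := by
    rw [hI]
    intro x hx
    have hr : 0 ≤ ρ₀ x := hρnn x hx
    have hW : iteratedDerivWithin 2 w s x = w'' x := hiter w x hx
    have e3 : ρ₀ x ^ ((3:ℝ)/2) * ρ₀ x ^ ((3:ℝ)/2) = ρ₀ x ^ 3 := by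
      rw [← Real.rpow_add' hr (by norm_num),
        show ((3:ℝ)/2 + 3/2) = ((3:ℕ):ℝ) by norm_num, Real.rpow_natCast]
    have e1 : ρ₀ x ^ ((1:ℝ)/2) * ρ₀ x ^ ((1:ℝ)/2) = ρ₀ x := by
      rw [← Real.rpow_add' hr (by norm_num),
        show ((1:ℝ)/2 + 1/2) = (1:ℝ) by norm_num, Real.rpow_one]
    have e2 : ρ₀ x ^ ((3:ℝ)/2) * ρ₀ x ^ ((1:ℝ)/2) = ρ₀ x ^ 2 := by
      rw [← Real.rpow_add' hr (by norm_num),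
        show ((3:ℝ)/2 + 1/2) = ((2:ℕ):ℝ) by norm_num, Real.rpow_natCast]
    simp only [hW, hgm, hgs, hFdef]
    linear_combination (w'' x)^2 * e3 + (4 * ρ' x * w' x * w'' x) * e2 +
      (4 * (ρ' x)^2 * (w' x)^2) * e1
  calc (∫ x in (0:ℝ)..1,
        ((ρ₀ x) ^ ((3:ℝ)/2) * iteratedDerivWithin 2 w s x +
          2 * (ρ₀ x) ^ ((1:ℝ)/2) * ρ' x * w' x) ^ 2)
      = ∫ x in (0:ℝ)..1, ((gmain x - 2 * gsub x) + F x) := integral_congr hpt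
    _ = (∫ x in (0:ℝ)..1, (gmain x - 2 * gsub x)) + ∫ x in (0:ℝ)..1, F x :=
        integral_add (hgmint.sub (hgsint.const_mul 2)) hFint
    _ = (∫ x in (0:ℝ)..1, gmain x) - 2 * ∫ x in (0:ℝ)..1, gsub x := by
        rw [hFeq, add_zero, integral_sub hgmint (hgsint.const_mul 2),
          intervalIntegral.integral_const_mul]
    _ = (∫ x in (0:ℝ)..1, (ρ₀ x) ^ 3 * (iteratedDerivWithin 2 w s x) ^ 2) -
        2 * ∫ x in (0:ℝ)..1, iteratedDerivWithin 2 ρ₀ s x * (ρ₀ x) ^ 2 * (w' x) ^ 2 := by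
        congr 1
        · apply integral_congr
          rw [hI]; intro x hx; simp [hgm, hiter w x hx, hw''def, hw'def]
        · congr 1
          apply integral_congr
          rw [hI]; intro x hx; simp [hgs, hiter ρ₀ x hx, hρ''def, hρ'def]
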